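/- In a uniformly convex normed space E, if a sequence (x_n) in the closed unit ball satisfies ‖x_n‖ → ‖x̂‖ and liminf_{n→∞} (‖x_n - w‖ - ‖w‖) ≥ ‖x̂ - w‖ - ‖w‖ for every w in the closed unit ball, then ‖x_n - x̂‖ → 0. -/

import Mathlib

open Filter Topology

variable {E : Type*} [NormedAddCommGroup E] [NormedSpace ℝ E]

theorem unifConvex_dweak_imp_strong
    (huc : ∀ ε > (0:ℝ), ∃ δ > (0:ℝ), ∀ x y : E, ‖x‖ ≤ 1 → ‖y‖ ≤ 1 →
      ε < ‖x - y‖ → ‖x + y‖ / 2 ≤ 1 - δ)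
    (x : ℕ → E) (hx : ∀ n, ‖x n‖ ≤ 1) (xhat : E) (hxhat : ‖xhat‖ ≤ 1)
    (hnorm : Tendsto (fun n => ‖x n‖) atTop (𝓝 ‖xhat‖))
    (hweak : ∀ w : E, ‖w‖ ≤ 1 →
      ‖xhat - w‖ - ‖w‖ ≤ atTop.liminf fun n => ‖x n - w‖ - ‖w‖) :
    Tendsto (fun n => ‖x n - xhat‖) atTop (𝓝 0) := by
  rcases eq_or_lt_of_le (norm_nonneg xhat) with h0 | h0
  · have hx0 : xhat = 0 := by rw [eq_comm, norm_eq_zero] at h0; exact h0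
    subst hx0
    simpa using hnorm
  · set a := ‖xhat‖ with ha
    have hane : a ≠ 0 := ne_of_gt h0
    have h2a : ‖xhat - (-xhat)‖ = 2 * a := by
      rw [sub_neg_eq_add, ← two_smul ℝ xhat, norm_smul]
      simp [ha]
    have hLlim : a ≤ atTop.liminf (fun n => ‖x n + xhat‖ - a) := by
      have h := hweak (-xhat) (by rw [norm_neg]; exact hxhat)
      rw [h2a, norm_neg, ← ha] at h
      simp only [sub_neg_eq_add] at h
      linarith
    have hbdd : IsBoundedUnder (· ≥ ·) atTop (fun n => ‖x n + xhat‖ - a) :=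
      ⟨-a, Filter.eventually_map.2 (Eventually.of_forall fun n => by
        have := norm_nonneg (x n + xhat); simp only [ge_iff_le]; linarith)⟩
    rw [Metric.tendsto_nhds]
    intro ε hε
    obtain ⟨δ, hδ, hδ'⟩ := huc (ε / 4) (by linarith)
    set η := min (a * δ / 2) (min (ε / 4) (a / 2)) with hη
    have hη0 : 0 < η :=
      lt_min (by positivity) (lt_min (by linarith) (by linarith))
    have hηδ : η ≤ a * δ / 2 := min_le_left _ _
    have hηε : η ≤ ε / 4 := le_trans (min_le_right _ _) (min_le_left _ _)
    have hηa : η ≤ a / 2 := le_trans (min_le_right _ _) (min_le_right _ _)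
    have hev1 : ∀ᶠ n in atTop, 2 * a - η < ‖x n + xhat‖ := by
      have hlt : a - η < atTop.liminf (fun n => ‖x n + xhat‖ - a) :=
        lt_of_lt_of_le (by linarith) hLlim
      filter_upwards [Filter.eventually_lt_of_lt_liminf hlt hbdd] with n hn
      linarith
    have hev2 : ∀ᶠ n in atTop, |‖x n‖ - a| < η := by
      have := Metric.tendsto_nhds.1 hnorm η hη0
      filter_upwards [this] with n hn
      rwa [Real.dist_eq] at hn
    filter_upwards [hev1, hev2] with n hn1 hn2
    have hxn_pos : 0 < ‖x n‖ := by
      have := abs_lt.1 hn2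
      linarith [this.1]
    have hxne : ‖x n‖ ≠ 0 := ne_of_gt hxn_pos
    set u := (‖x n‖)⁻¹ • (x n) with hu
    set v := a⁻¹ • xhat with hv
    have hunorm : ‖u‖ = 1 := by
      rw [hu, norm_smul, Real.norm_eq_abs, abs_inv, abs_of_pos hxn_pos]
      field_simp
    have hvnorm : ‖v‖ = 1 := by
      rw [hv, norm_smul, Real.norm_eq_abs, abs_inv, abs_of_pos h0]
      field_simp
      exact ha.symm
    have hdecomp : u + v = a⁻¹ • (x n + xhat) + ((‖x n‖)⁻¹ - a⁻¹) • x n := by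
      rw [hu, hv, smul_add, sub_smul]
      abel
    have h1 : ‖a⁻¹ • (x n + xhat)‖ - ‖((‖x n‖)⁻¹ - a⁻¹) • x n‖ ≤ ‖u + v‖ := by
      rw [hdecomp]
      simpa [sub_neg_eq_add] using norm_sub_norm_le (a⁻¹ • (x n + xhat))
        (-(((‖x n‖)⁻¹ - a⁻¹) • x n))
    have h2 : ‖a⁻¹ • (x n + xhat)‖ = ‖x n + xhat‖ / a := by
      rw [norm_smul, Real.norm_eq_abs, abs_inv, abs_of_pos h0]; ring
    have h3 : ‖((‖x n‖)⁻¹ - a⁻¹) • x n‖ = |a - ‖x n‖| / a := by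
      rw [norm_smul, Real.norm_eq_abs,
        show (‖x n‖)⁻¹ - a⁻¹ = (a - ‖x n‖) / (‖x n‖ * a) from by
          field_simp,
        abs_div, abs_of_pos (by positivity : (0:ℝ) < ‖x n‖ * a)]
      field_simp
    have h5 : |a - ‖x n‖| < η := by rwa [abs_sub_comm]
    have hkey : 2 - δ < ‖u + v‖ := by
      have h4 : 2 - δ < (‖x n + xhat‖ - |a - ‖x n‖|) / a := by
        rw [lt_div_iff₀ h0]
        nlinarith
      calc 2 - δ < (‖x n + xhat‖ - |a - ‖x n‖|) / a := h4
        _ = ‖x n + xhat‖ / a - |a - ‖x n‖| / a := by ring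
        _ ≤ ‖u + v‖ := by rw [← h2, ← h3]; exact h1
    have hsmall : ‖u - v‖ ≤ ε / 4 := by
      by_contra hc
      push_neg at hc
      have := hδ' u v (le_of_eq hunorm) (le_of_eq hvnorm) hc
      linarith
    have hrecomb : x n - xhat = ‖x n‖ • (u - v) + (‖x n‖ - a) • v := by
      rw [hu, hv, smul_sub, sub_smul, smul_inv_smul₀ hxne, smul_smul, smul_smul,
        mul_inv_cancel₀ hane, one_smul]
      abel
    have hfinal : ‖x n - xhat‖ < ε := by
      rw [hrecomb]
      calc ‖‖x n‖ • (u - v) + (‖x n‖ - a) • v‖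
          ≤ ‖‖x n‖ • (u - v)‖ + ‖(‖x n‖ - a) • v‖ := norm_add_le _ _
        _ = ‖x n‖ * ‖u - v‖ + |‖x n‖ - a| * ‖v‖ := by
            rw [norm_smul, norm_smul, Real.norm_eq_abs, Real.norm_eq_abs,
              abs_of_pos hxn_pos]
        _ ≤ 1 * (ε / 4) + η * 1 := by
            apply add_le_add
            · have h7 := norm_nonneg (u - v)
              nlinarith [hx n]
            · rw [hvnorm, mul_one, mul_one]; exact hn2.le
        _ < ε := by linarith
    rw [Real.dist_eq, sub_zero, abs_of_nonneg (norm_nonneg _)]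
    exact hfinal
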